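/- Let X = (ℚ ∩ (0,1)) ∪ [2,3], regarded as a subspace of ℝ with the natural topology. Then X is a quasi Baire space (for every countable family of dense open subsets of X, the intersection of the family is nonempty), but X is not a Baire space (there exists a countable family of dense open subsets of X whose intersection is not dense in X). -/
import Mathlib


open Set

/-- The set `(ℚ ∩ (0,1)) ∪ [2,3]` as a subset of `ℝ`. -/
def exampleSet : Set ℝ :=
  (Set.range ((↑) : ℚ → ℝ) ∩ Set.Ioo (0 : ℝ) 1) ∪ Set.Icc (2 : ℝ) 3

lemma icc_subset : Set.Icc (2 : ℝ) 3 ⊆ exampleSet := fun _ hx => Or.inr hx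

noncomputable def e : ↥(Set.Icc (2:ℝ) 3) → ↥exampleSet := Set.inclusion icc_subset

lemma e_openEmb : Topology.IsOpenEmbedding e := by
  refine ⟨Topology.IsEmbedding.inclusion icc_subset, ?_⟩
  have : Set.range e = (Subtype.val : ↥exampleSet → ℝ) ⁻¹' Set.Ioi (3/2 : ℝ) := by
    rw [e, Set.range_inclusion]
    ext x
    simp only [Set.mem_setOf_eq, Set.mem_preimage, Set.mem_Ioi]
    constructor
    · intro hx; linarith [hx.1]
    · intro hx
      rcases x.2 with h | h
      · exfalso; linarith [h.2.2]
      · exact h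
  rw [this]
  exact isOpen_Ioi.preimage continuous_subtype_val

theorem stmt1 :
    (∀ F : Set (Set ↥exampleSet), F.Countable → (∀ U ∈ F, IsOpen U ∧ Dense U) →
      (⋂₀ F).Nonempty) ∧
    ¬ (∀ F : Set (Set ↥exampleSet), F.Countable → (∀ U ∈ F, IsOpen U ∧ Dense U) →
      Dense (⋂₀ F)) := by
  constructor
  · intro F hF hFo
    -- pull back to Icc 2 3, which is a Baire space
    set G : Set (Set ↥(Set.Icc (2:ℝ) 3)) := (fun U => e ⁻¹' U) '' F with hG
    have hGc : G.Countable := hF.image _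
    have hGo : ∀ s ∈ G, IsOpen s := by
      rintro s ⟨U, hU, rfl⟩
      exact (hFo U hU).1.preimage e_openEmb.continuous
    have hGd : ∀ s ∈ G, Dense s := by
      rintro s ⟨U, hU, rfl⟩
      rw [dense_iff_inter_open]
      intro W hW hWne
      have hWopen : IsOpen (e '' W) := e_openEmb.isOpenMap W hW
      have hWim : (e '' W).Nonempty := hWne.image e
      rcases dense_iff_inter_open.1 (hFo U hU).2 (e '' W) hWopen hWim with
        ⟨x, ⟨⟨w, hwW, rfl⟩, hxU⟩⟩
      exact ⟨w, hwW, hxU⟩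
    have hdense : Dense (⋂₀ G) := dense_sInter_of_isOpen hGo hGc hGd
    have hne : Nonempty ↥(Set.Icc (2:ℝ) 3) := ⟨⟨2, by norm_num⟩⟩
    rcases hdense.nonempty with ⟨z, hz⟩
    refine ⟨e z, fun U hU => ?_⟩
    exact hz (e ⁻¹' U) ⟨U, hU, rfl⟩
  · intro h
    -- the rational part of exampleSet
    set S : Set ↥exampleSet := {x | (x : ℝ) < 1} with hS
    set F : Set (Set ↥exampleSet) := (fun q => ({q}ᶜ : Set ↥exampleSet)) '' S with hF
    have hSc : S.Countable := by
      have : S ⊆ (Subtype.val : ↥exampleSet → ℝ) ⁻¹' (Set.range ((↑) : ℚ → ℝ)) := by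
        intro x hx
        rcases x.2 with h' | h'
        · exact h'.1
        · exfalso; have := h'.1; simp only [hS, Set.mem_setOf_eq] at hx; linarith
      exact ((Set.countable_range _).preimage Subtype.val_injective).mono this
    have hFc : F.Countable := hSc.image _
    have hFod : ∀ U ∈ F, IsOpen U ∧ Dense U := by
      rintro U ⟨q, hq, rfl⟩
      refine ⟨isOpen_compl_singleton, dense_compl_singleton_iff_not_open.2 ?_⟩
      intro hopen
      rcases isOpen_induced_iff.1 hopen with ⟨V, hV, hVq⟩
      have hqV : (q : ℝ) ∈ V := by
        have : q ∈ (Subtype.val : ↥exampleSet → ℝ) ⁻¹' V := hVq ▸ rfl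
        exact this
      rcases Metric.isOpen_iff.1 hV (q : ℝ) hqV with ⟨ε, hε, hball⟩
      have hq1 : (0:ℝ) < (q:ℝ) ∧ (q:ℝ) < 1 := by
        rcases q.2 with h' | h'
        · exact ⟨h'.2.1, h'.2.2⟩
        · exfalso; simp only [hS, Set.mem_setOf_eq] at hq; linarith [h'.1]
      obtain ⟨r, hr1, hr2⟩ := exists_rat_btwn (show max 0 ((q:ℝ) - ε) < (q:ℝ) by
        rcases max_cases 0 ((q:ℝ) - ε) with ⟨he, _⟩ | ⟨he, _⟩ <;> rw [he] <;> [exact hq1.1; linarith])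
      have hr0 : (0:ℝ) < (r:ℝ) := lt_of_le_of_lt (le_max_left _ _) hr1
      have hrball : (r:ℝ) ∈ Metric.ball (q:ℝ) ε := by
        rw [Metric.mem_ball, Real.dist_eq, abs_lt]
        constructor <;> [skip; linarith]
        have := lt_of_le_of_lt (le_max_right 0 ((q:ℝ) - ε)) hr1
        linarith
      have hrX : (r:ℝ) ∈ exampleSet := Or.inl ⟨⟨r, rfl⟩, hr0, lt_trans hr2 hq1.2⟩
      have : (⟨(r:ℝ), hrX⟩ : ↥exampleSet) ∈ (Subtype.val : ↥exampleSet → ℝ) ⁻¹' V :=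
        hball hrball
      rw [hVq] at this
      have : ((⟨(r:ℝ), hrX⟩ : ↥exampleSet) : ℝ) = (q : ℝ) := congrArg Subtype.val this
      simp only at this
      linarith
    have hd := h F hFc hFod
    -- the intersection is contained in the closed set val ⁻¹' Icc 2 3
    have hsub : ⋂₀ F ⊆ (Subtype.val : ↥exampleSet → ℝ) ⁻¹' Set.Icc (2:ℝ) 3 := by
      intro x hx
      rcases x.2 with h' | h'
      · exfalso
        have hxS : x ∈ S := by simp only [hS, Set.mem_setOf_eq]; exact h'.2.2
        have := hx ({x}ᶜ) ⟨x, hxS, rfl⟩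
        exact this rfl
      · exact h'
    have hclosed : IsClosed ((Subtype.val : ↥exampleSet → ℝ) ⁻¹' Set.Icc (2:ℝ) 3) :=
      isClosed_Icc.preimage continuous_subtype_val
    have hhalf : ((1:ℝ)/2) ∈ exampleSet := by
      refine Or.inl ⟨⟨(1/2 : ℚ), by norm_num⟩, by norm_num⟩
    have hmem : (⟨(1:ℝ)/2, hhalf⟩ : ↥exampleSet) ∈ closure (⋂₀ F) := hd _
    have : (⟨(1:ℝ)/2, hhalf⟩ : ↥exampleSet) ∈
        (Subtype.val : ↥exampleSet → ℝ) ⁻¹' Set.Icc (2:ℝ) 3 :=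
      (hclosed.closure_subset_iff.2 hsub) hmem
    have h2 : (2:ℝ) ≤ 1/2 := this.1
    linarith
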